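/- Let Q_n be the para-chain square cactus of order n (n four-cycles in a chain, consecutive squares sharing one vertex, shared vertices opposite in each square). Then Mo_e(Q_{2k}) = 32k² and Mo_e(Q_{2k+1}) = 32k² + 32k for all k ≥ 1. -/

import Mathlib

open Finset

section MostarDefs

variable {V : Type*}

/-- Number of vertices of `G` strictly closer to `u` than to `v`. -/
noncomputable def closerCount (G : SimpleGraph V) (u v : V) : ℕ :=
  Nat.card {w : V // G.dist w u < G.dist w v}

/-- Contribution `|n_u - n_v|` of an edge, as a symmetric function on `Sym2 V`. -/
noncomputable def mostarTerm (G : SimpleGraph V) : Sym2 V → ℕ :=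
  Sym2.lift ⟨fun u v => ((closerCount G u v : ℤ) - closerCount G v u).natAbs,
    fun u v => by dsimp only; omega⟩

/-- The Mostar index of a finite graph. -/
noncomputable def mostar (G : SimpleGraph V) [Finite V] : ℕ :=
  letI := Fintype.ofFinite V
  letI := Classical.decEq V
  letI := Classical.decRel G.Adj
  ∑ e ∈ G.edgeFinset, mostarTerm G e

/-- Distance from a vertex `w` to an edge, as min over the endpoints. -/
noncomputable def vertexEdgeDist (G : SimpleGraph V) (w : V) : Sym2 V → ℕ :=
  Sym2.lift ⟨fun x y => min (G.dist x w) (G.dist y w), fun _ _ => min_comm _ _⟩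

/-- Number of edges of `G` strictly closer to `u` than to `v`. -/
noncomputable def edgeCloserCount (G : SimpleGraph V) (u v : V) : ℕ :=
  Nat.card {e : Sym2 V // e ∈ G.edgeSet ∧ vertexEdgeDist G u e < vertexEdgeDist G v e}

/-- Contribution `|m_u - m_v|` of an edge, as a symmetric function on `Sym2 V`. -/
noncomputable def emostarTerm (G : SimpleGraph V) : Sym2 V → ℕ :=
  Sym2.lift ⟨fun u v => ((edgeCloserCount G u v : ℤ) - edgeCloserCount G v u).natAbs,
    fun u v => by dsimp only; omega⟩

/-- The edge Mostar index of a finite graph. -/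
noncomputable def emostar (G : SimpleGraph V) [Finite V] : ℕ :=
  letI := Fintype.ofFinite V
  letI := Classical.decEq V
  letI := Classical.decRel G.Adj
  ∑ e ∈ G.edgeFinset, emostarTerm G e

end MostarDefs

/-- Global index of the `p`-th vertex of the `i`-th cycle in a chain of `n` cycles of
length `c`, where consecutive cycles share one vertex: position `0` of cycle `i` is the
entry cut vertex (identified with position `d` of cycle `i-1`). -/
def chainPos (c d i p : ℕ) : ℕ :=
  if p = 0 then (if i = 0 then 0 else (i - 1) * (c - 1) + d) else i * (c - 1) + p

/-- The chain cactus consisting of `n` cycles of length `c` in a chain, where consecutive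
cycles share exactly one vertex, and the two cut vertices of each internal cycle are at
positions `0` and `d` (hence at distance `min d (c - d)` in the cycle). -/
def cactusChain (n c d : ℕ) : SimpleGraph (Fin (n * (c - 1) + 1)) where
  Adj u v := u ≠ v ∧ ∃ i p q, i < n ∧ p < c ∧ q < c ∧
    ((p + 1) % c = q ∨ (q + 1) % c = p) ∧
    u.val = chainPos c d i p ∧ v.val = chainPos c d i q
  symm := ⟨by
    rintro u v ⟨hne, i, p, q, hi, hp, hq, hpq, hu, hv⟩
    exact ⟨hne.symm, i, q, p, hi, hq, hp, hpq.symm, hv, hu⟩⟩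
  loopless := ⟨fun u h => h.1 rfl⟩

namespace ParaSquare

def lev (v : ℕ) : ℕ :=
  if v % 3 = 0 then 2 * v / 3 - 1
  else if v % 3 = 1 then (2 * v + 1) / 3
  else (2 * v + 2) / 3

def cutV (j : ℕ) : ℕ := 3 * j - 1
def sideV (j t : ℕ) : ℕ := 3 * j + 1 + 2 * t

lemma lev_cutV (j : ℕ) : lev (cutV j) = 2 * j := by
  unfold lev cutV; split_ifs <;> omega

lemma lev_sideV (j t : ℕ) (ht : t ≤ 1) : lev (sideV j t) = 2 * j + 1 := by
  unfold lev sideV; split_ifs <;> omega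

def D (x y : ℕ) : ℕ :=
  if x = y then 0 else if lev x = lev y then 2 else (lev x - lev y) + (lev y - lev x)

lemma D_cc (a c : ℕ) : D (cutV a) (cutV c) = (2*a - 2*c) + (2*c - 2*a) := by
  unfold D
  rcases eq_or_ne a c with rfl | h
  · simp
  · rw [if_neg (by unfold cutV; omega), if_neg (by rw [lev_cutV, lev_cutV]; omega),
      lev_cutV, lev_cutV]

lemma D_sc (a s c : ℕ) (hs : s ≤ 1) : D (sideV a s) (cutV c) = (2*a+1 - 2*c) + (2*c - (2*a+1)) := by
  unfold D
  rw [if_neg (by unfold cutV sideV; omega),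
    if_neg (by rw [lev_cutV, lev_sideV _ _ hs]; omega), lev_cutV, lev_sideV _ _ hs]

lemma D_cs (c a s : ℕ) (hs : s ≤ 1) : D (cutV c) (sideV a s) = (2*a+1 - 2*c) + (2*c - (2*a+1)) := by
  unfold D
  rw [if_neg (by unfold cutV sideV; omega),
    if_neg (by rw [lev_cutV, lev_sideV _ _ hs]; omega), lev_cutV, lev_sideV _ _ hs]
  omega

lemma D_ss (a s c r : ℕ) (hs : s ≤ 1) (hr : r ≤ 1) :
    D (sideV a s) (sideV c r) =
      if a = c then (if s = r then 0 else 2) else (2*a - 2*c) + (2*c - 2*a) := by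
  unfold D
  rcases eq_or_ne a c with rfl | h
  · rcases eq_or_ne s r with rfl | hsr
    · simp
    · rw [if_neg (by unfold sideV; omega), if_pos (by rw [lev_sideV _ _ hs, lev_sideV _ _ hr]),
        if_pos rfl, if_neg hsr]
  · rw [if_neg (by unfold sideV; omega),
      if_neg (by rw [lev_sideV _ _ hs, lev_sideV _ _ hr]; omega), if_neg h,
      lev_sideV _ _ hs, lev_sideV _ _ hr]
    omega

lemma vclass {n v : ℕ} (hv : v ≤ 3 * n) :
    (∃ j, j ≤ n ∧ v = cutV j) ∨ (∃ j t, j < n ∧ t ≤ 1 ∧ v = sideV j t) := by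
  rcases Nat.lt_or_ge v 1 with h | h
  · exact Or.inl ⟨0, by omega, by unfold cutV; omega⟩
  · rcases (show v % 3 = 0 ∨ v % 3 = 1 ∨ v % 3 = 2 by omega) with h3 | h3 | h3
    · exact Or.inr ⟨v / 3 - 1, 1, by omega, le_refl 1, by unfold sideV; omega⟩
    · exact Or.inr ⟨v / 3, 0, by omega, by omega, by unfold sideV; omega⟩
    · exact Or.inl ⟨v / 3 + 1, by omega, by unfold cutV; omega⟩

lemma chainPos_0 (i : ℕ) : chainPos 4 2 i 0 = cutV i := by
  unfold chainPos cutV; split_ifs <;> omega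
lemma chainPos_1 (i : ℕ) : chainPos 4 2 i 1 = sideV i 0 := by
  unfold chainPos sideV; norm_num; omega
lemma chainPos_2 (i : ℕ) : chainPos 4 2 i 2 = cutV (i+1) := by
  unfold chainPos cutV; norm_num; omega
lemma chainPos_3 (i : ℕ) : chainPos 4 2 i 3 = sideV i 1 := by
  unfold chainPos sideV; norm_num; omega

lemma cactusChain_adj {n c d : ℕ} {u v : Fin (n * (c-1) + 1)} :
    (cactusChain n c d).Adj u v ↔ (u ≠ v ∧ ∃ i p q, i < n ∧ p < c ∧ q < c ∧
    ((p + 1) % c = q ∨ (q + 1) % c = p) ∧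
    u.val = chainPos c d i p ∧ v.val = chainPos c d i q) := Iff.rfl

lemma adj_cs {n : ℕ} {u v : Fin (n*3+1)} {j t : ℕ} (hj : j < n) (ht : t ≤ 1)
    (hu : u.val = cutV j) (hv : v.val = sideV j t) : (cactusChain n 4 2).Adj u v := by
  rw [cactusChain_adj]
  refine ⟨fun h => by subst h; unfold cutV sideV at *; omega, j, 0, 1 + 2*t, hj, by omega, by omega,
    by omega, by rw [chainPos_0]; exact hu, ?_⟩
  have : chainPos 4 2 j (1 + 2*t) = sideV j t := by
    unfold chainPos sideV; rw [if_neg (by omega)]; omega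
  rw [this]; exact hv

lemma adj_sc {n : ℕ} {u v : Fin (n*3+1)} {j t : ℕ} (hj : j < n) (ht : t ≤ 1)
    (hu : u.val = sideV j t) (hv : v.val = cutV (j+1)) : (cactusChain n 4 2).Adj u v := by
  rw [cactusChain_adj]
  refine ⟨fun h => by subst h; unfold cutV sideV at *; omega, j, 1 + 2*t, 2, hj, by omega, by omega,
    by omega, ?_, by rw [chainPos_2]; exact hv⟩
  have : chainPos 4 2 j (1 + 2*t) = sideV j t := by
    unfold chainPos sideV; rw [if_neg (by omega)]; omega
  rw [this]; exact hu

lemma adj_iff {n : ℕ} (u v : Fin (n*3+1)) :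
    (cactusChain n 4 2).Adj u v ↔
      ∃ j t, j < n ∧ t ≤ 1 ∧
        ((u.val = cutV j ∧ v.val = sideV j t) ∨ (v.val = cutV j ∧ u.val = sideV j t) ∨
         (u.val = sideV j t ∧ v.val = cutV (j+1)) ∨ (v.val = sideV j t ∧ u.val = cutV (j+1))) := by
  constructor
  · rw [cactusChain_adj]
    rintro ⟨hne, i, p, q, hi, hp, hq, hpq, hu, hv⟩
    interval_cases p <;> interval_cases q <;>
      simp only [chainPos_0, chainPos_1, chainPos_2, chainPos_3] at hu hv <;>
      rcases hpq with h | h <;>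
      first
        | omega
        | exact ⟨i, 0, hi, by omega, by omega⟩
        | exact ⟨i, 1, hi, by omega, by omega⟩
  · rintro ⟨j, t, hj, ht, hc⟩
    rcases hc with ⟨h1, h2⟩ | ⟨h1, h2⟩ | ⟨h1, h2⟩ | ⟨h1, h2⟩
    · exact adj_cs hj ht h1 h2
    · exact (adj_cs hj ht h1 h2).symm
    · exact adj_sc hj ht h1 h2
    · exact (adj_sc hj ht h1 h2).symm


lemma adj_lev {n : ℕ} {u v : Fin (n*3+1)} (h : (cactusChain n 4 2).Adj u v) :
    lev u.val + 1 = lev v.val ∨ lev v.val + 1 = lev u.val := by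
  rw [adj_iff] at h
  obtain ⟨j, t, hj, ht, hc⟩ := h
  rcases hc with ⟨h1, h2⟩ | ⟨h1, h2⟩ | ⟨h1, h2⟩ | ⟨h1, h2⟩ <;>
    rw [h1, h2] <;> rw [lev_cutV, lev_sideV _ _ ht] <;> omega

lemma D_self (x : ℕ) : D x x = 0 := by simp [D]

lemma D_step {n : ℕ} (y : ℕ) {u w : Fin (n*3+1)} (h : (cactusChain n 4 2).Adj u w) :
    D u.val y ≤ D w.val y + 1 := by
  have hlev := adj_lev h
  unfold D
  rcases eq_or_ne u.val y with h1 | h1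
  · simp [h1]
  · rw [if_neg h1]
    rcases eq_or_ne w.val y with h2 | h2
    · rw [if_pos h2]
      rw [h2] at hlev
      rw [if_neg (show ¬(lev u.val = lev y) by omega)]
      omega
    · rw [if_neg h2]
      rcases eq_or_ne (lev u.val) (lev y) with h3 | h3
      · rw [if_pos h3]
        rcases eq_or_ne (lev w.val) (lev y) with h4 | h4
        · rw [if_pos h4]; omega
        · rw [if_neg h4]; omega
      · rw [if_neg h3]
        rcases eq_or_ne (lev w.val) (lev y) with h4 | h4
        · rw [if_pos h4]; omega
        · rw [if_neg h4]; omega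

lemma D_le_walk {n : ℕ} {u v : Fin (n*3+1)} (p : (cactusChain n 4 2).Walk u v) :
    D u.val v.val ≤ p.length := by
  induction p with
  | nil => simp [D]
  | cons h p ih =>
    rw [SimpleGraph.Walk.length_cons]
    exact le_trans (D_step _ h) (Nat.add_le_add_right ih 1)

lemma cutV_lt {n j : ℕ} (h : j ≤ n) : cutV j < n*3+1 := by unfold cutV; omega
lemma sideV_lt {n j t : ℕ} (h : j < n) (ht : t ≤ 1) : sideV j t < n*3+1 := by unfold sideV; omega

lemma exists_step {n : ℕ} (u v : Fin (n*3+1)) (hne : u ≠ v) :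
    ∃ z : Fin (n*3+1), (cactusChain n 4 2).Adj u z ∧ D z.val v.val + 1 ≤ D u.val v.val := by
  have hu3 : u.val ≤ 3 * n := by omega
  have hv3 : v.val ≤ 3 * n := by omega
  have hne' : u.val ≠ v.val := fun h => hne (Fin.ext h)
  rcases vclass hu3 with ⟨j, hj, hu⟩ | ⟨j, t, hj, ht, hu⟩ <;>
    rcases vclass hv3 with ⟨j', hj', hv⟩ | ⟨j', t', hj', ht', hv⟩
  · -- cut, cut
    have hjj : j ≠ j' := fun h => hne' (by rw [hu, hv, h])
    rcases Nat.lt_or_ge j j' with hlt | hge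
    · refine ⟨⟨sideV j 0, sideV_lt (by omega) (by omega)⟩, adj_cs (by omega) (by omega) hu rfl, ?_⟩
      rw [hu, hv]
      show D (sideV j 0) (cutV j') + 1 ≤ D (cutV j) (cutV j')
      rw [D_sc _ _ _ (by omega), D_cc]
      omega
    · have hj1 : 1 ≤ j := by omega
      refine ⟨⟨sideV (j-1) 0, sideV_lt (by omega) (by omega)⟩,
        ((adj_sc (n := n) (by omega) (by omega) rfl (by rw [hu]; congr 1; omega)).symm), ?_⟩
      rw [hu, hv]
      show D (sideV (j-1) 0) (cutV j') + 1 ≤ D (cutV j) (cutV j')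
      rw [D_sc _ _ _ (by omega), D_cc]
      omega
  · -- cut, side
    rcases Nat.lt_or_ge j (j'+1) with hlt | hge
    · refine ⟨⟨sideV j t', sideV_lt (by omega) ht'⟩, adj_cs (by omega) ht' hu rfl, ?_⟩
      rw [hu, hv]
      show D (sideV j t') (sideV j' t') + 1 ≤ D (cutV j) (sideV j' t')
      rw [D_ss _ _ _ _ ht' ht', D_cs _ _ _ ht']
      rcases eq_or_ne j j' with rfl | hjj
      · rw [if_pos rfl, if_pos rfl]; omega
      · rw [if_neg hjj]; omega
    · rcases eq_or_ne j (j'+1) with rfl | hjj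
      · refine ⟨v, (adj_sc hj' ht' hv hu).symm, ?_⟩
        rw [hu, hv, D_self, D_cs _ _ _ ht']
        omega
      · have hj2 : 2 ≤ j := by omega
        refine ⟨⟨sideV (j-1) 0, sideV_lt (by omega) (by omega)⟩,
          ((adj_sc (n := n) (by omega) (by omega) rfl (by rw [hu]; congr 1; omega)).symm), ?_⟩
        rw [hu, hv]
        show D (sideV (j-1) 0) (sideV j' t') + 1 ≤ D (cutV j) (sideV j' t')
        rw [D_ss _ _ _ _ (by omega) ht', if_neg (by omega), D_cs _ _ _ ht']
        omega
  · -- side, cut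
    rcases Nat.lt_or_ge j' (j+1) with hlt | hge
    · refine ⟨⟨cutV j, cutV_lt (by omega)⟩, (adj_cs (by omega) ht rfl hu).symm, ?_⟩
      rw [hu, hv]
      show D (cutV j) (cutV j') + 1 ≤ D (sideV j t) (cutV j')
      rw [D_cc, D_sc _ _ _ ht]
      omega
    · refine ⟨⟨cutV (j+1), cutV_lt (by omega)⟩, adj_sc (by omega) ht hu rfl, ?_⟩
      rw [hu, hv]
      show D (cutV (j+1)) (cutV j') + 1 ≤ D (sideV j t) (cutV j')
      rw [D_cc, D_sc _ _ _ ht]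
      omega
  · -- side, side
    rcases eq_or_ne j j' with rfl | hjj
    · have htt : t ≠ t' := fun h => hne' (by rw [hu, hv, h])
      refine ⟨⟨cutV j, cutV_lt (by omega)⟩, (adj_cs (by omega) ht rfl hu).symm, ?_⟩
      rw [hu, hv]
      show D (cutV j) (sideV j t') + 1 ≤ D (sideV j t) (sideV j t')
      rw [D_cs _ _ _ ht', D_ss _ _ _ _ ht ht', if_pos rfl, if_neg htt]
      omega
    · rcases Nat.lt_or_ge j j' with hlt | hge
      · refine ⟨⟨cutV (j+1), cutV_lt (by omega)⟩, adj_sc (by omega) ht hu rfl, ?_⟩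
        rw [hu, hv]
        show D (cutV (j+1)) (sideV j' t') + 1 ≤ D (sideV j t) (sideV j' t')
        rw [D_cs _ _ _ ht', D_ss _ _ _ _ ht ht', if_neg hjj]
        omega
      · refine ⟨⟨cutV j, cutV_lt (by omega)⟩, (adj_cs (by omega) ht rfl hu).symm, ?_⟩
        rw [hu, hv]
        show D (cutV j) (sideV j' t') + 1 ≤ D (sideV j t) (sideV j' t')
        rw [D_cs _ _ _ ht', D_ss _ _ _ _ ht ht', if_neg hjj]
        omega

lemma exists_walk {n : ℕ} : ∀ (m : ℕ) (u v : Fin (n*3+1)), D u.val v.val ≤ m →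
    ∃ p : (cactusChain n 4 2).Walk u v, p.length ≤ m := by
  intro m
  induction m with
  | zero =>
    intro u v h
    have huv : u = v := by
      by_contra hne
      have hne' : u.val ≠ v.val := fun h' => hne (Fin.ext h')
      unfold D at h
      rw [if_neg hne'] at h
      split_ifs at h <;> omega
    subst huv
    exact ⟨SimpleGraph.Walk.nil, by simp⟩
  | succ m ih =>
    intro u v h
    by_cases huv : u = v
    · subst huv; exact ⟨SimpleGraph.Walk.nil, by simp⟩
    · obtain ⟨z, hadj, hz⟩ := exists_step u v huv
      obtain ⟨p, hp⟩ := ih z v (by omega)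
      exact ⟨SimpleGraph.Walk.cons hadj p, by rw [SimpleGraph.Walk.length_cons]; omega⟩

lemma dist_eq {n : ℕ} (u v : Fin (n*3+1)) :
    (cactusChain n 4 2).dist u v = D u.val v.val := by
  obtain ⟨p, hp⟩ := exists_walk (D u.val v.val) u v le_rfl
  refine le_antisymm (le_trans (SimpleGraph.dist_le p) hp) ?_
  obtain ⟨q, hq⟩ := SimpleGraph.Reachable.exists_walk_length_eq_dist ⟨p⟩
  rw [← hq]
  exact D_le_walk q

def cutF (n j : ℕ) : Fin (n*3+1) := ⟨cutV j % (n*3+1), Nat.mod_lt _ (by omega)⟩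
def sideF (n j t : ℕ) : Fin (n*3+1) := ⟨sideV j t % (n*3+1), Nat.mod_lt _ (by omega)⟩

lemma cutF_val {n j : ℕ} (h : j ≤ n) : (cutF n j).val = cutV j :=
  Nat.mod_eq_of_lt (cutV_lt h)
lemma sideF_val {n j t : ℕ} (h : j < n) (ht : t ≤ 1) : (sideF n j t).val = sideV j t :=
  Nat.mod_eq_of_lt (sideV_lt h ht)

def edgF (n : ℕ) (x : ℕ × ℕ × ℕ) : Sym2 (Fin (n*3+1)) :=
  s(sideF n x.1 x.2.1, cutF n (x.1 + x.2.2))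

def S (n : ℕ) : Finset (ℕ × ℕ × ℕ) := range n ×ˢ range 2 ×ˢ range 2

lemma mem_S {n : ℕ} {x : ℕ × ℕ × ℕ} : x ∈ S n ↔ x.1 < n ∧ x.2.1 ≤ 1 ∧ x.2.2 ≤ 1 := by
  simp only [S, mem_product, mem_range]; omega

lemma edgF_mem {n : ℕ} {x : ℕ × ℕ × ℕ} (hx : x ∈ S n) :
    edgF n x ∈ (cactusChain n 4 2).edgeSet := by
  obtain ⟨a, s, b⟩ := x
  simp only [mem_S] at hx
  obtain ⟨ha, hs, hb⟩ := hx
  have hadj : (cactusChain n 4 2).Adj (sideF n a s) (cutF n (a + b)) := by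
    interval_cases b
    · exact (adj_cs ha hs (by rw [cutF_val (by omega)]; congr 1) (sideF_val ha hs)).symm
    · exact adj_sc ha hs (sideF_val ha hs) (cutF_val (by omega))
  exact (SimpleGraph.mem_edgeSet _).mpr hadj

lemma edgeSet_sub {n : ℕ} {e : Sym2 (Fin (n*3+1))} (he : e ∈ (cactusChain n 4 2).edgeSet) :
    ∃ x ∈ S n, e = edgF n x := by
  induction e using Sym2.ind with
  | _ u v =>
    rw [SimpleGraph.mem_edgeSet, adj_iff] at he
    obtain ⟨j, t, hj, ht, hc⟩ := he
    have hsf : (sideF n j t).val = sideV j t := sideF_val hj ht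
    have hcf : (cutF n (j+0)).val = cutV j := by rw [cutF_val (by omega)]; congr 1
    have hcf1 : (cutF n (j+1)).val = cutV (j+1) := cutF_val (by omega)
    rcases hc with ⟨h1, h2⟩ | ⟨h1, h2⟩ | ⟨h1, h2⟩ | ⟨h1, h2⟩
    · refine ⟨(j, t, 0), mem_S.mpr ⟨hj, ht, by norm_num⟩, ?_⟩
      have hu' : u = cutF n (j+0) := Fin.ext (by rw [hcf]; exact h1)
      have hv' : v = sideF n j t := Fin.ext (by rw [hsf]; exact h2)
      rw [hu', hv']
      exact Sym2.eq_swap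
    · refine ⟨(j, t, 0), mem_S.mpr ⟨hj, ht, by norm_num⟩, ?_⟩
      have hu' : u = sideF n j t := Fin.ext (by rw [hsf]; exact h2)
      have hv' : v = cutF n (j+0) := Fin.ext (by rw [hcf]; exact h1)
      rw [hu', hv']
      rfl
    · refine ⟨(j, t, 1), mem_S.mpr ⟨hj, ht, by norm_num⟩, ?_⟩
      have hu' : u = sideF n j t := Fin.ext (by rw [hsf]; exact h1)
      have hv' : v = cutF n (j+1) := Fin.ext (by rw [hcf1]; exact h2)
      rw [hu', hv']
      rfl
    · refine ⟨(j, t, 1), mem_S.mpr ⟨hj, ht, by norm_num⟩, ?_⟩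
      have hu' : u = cutF n (j+1) := Fin.ext (by rw [hcf1]; exact h2)
      have hv' : v = sideF n j t := Fin.ext (by rw [hsf]; exact h1)
      rw [hu', hv']
      exact Sym2.eq_swap

lemma edgF_inj {n : ℕ} : Set.InjOn (edgF n) (S n) := by
  rintro ⟨a, s, b⟩ ha ⟨a', s', b'⟩ ha' h
  simp only [Finset.mem_coe, mem_S] at ha ha'
  obtain ⟨ha1, ha2, ha3⟩ := ha
  obtain ⟨hb1, hb2, hb3⟩ := ha'
  simp only [edgF, Sym2.eq_iff] at h
  have e1 := sideF_val ha1 ha2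
  have e2 := sideF_val hb1 hb2
  have e3 := cutF_val (show a + b ≤ n by omega)
  have e4 := cutF_val (show a' + b' ≤ n by omega)
  rcases h with ⟨h1, h2⟩ | ⟨h1, h2⟩
  · have g1 : sideV a s = sideV a' s' := by rw [← e1, ← e2, h1]
    have g2 : cutV (a + b) = cutV (a' + b') := by rw [← e3, ← e4, h2]
    simp only [sideV, cutV] at g1 g2
    simp only [Prod.mk.injEq]
    omega
  · have g1 : sideV a s = cutV (a' + b') := by rw [← e1, ← e4, h1]
    simp only [sideV, cutV] at g1
    omega

lemma count_eq {n : ℕ} (u v : Fin (n*3+1)) :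
    edgeCloserCount (cactusChain n 4 2) u v =
      ((S n).filter (fun x => vertexEdgeDist (cactusChain n 4 2) u (edgF n x) <
        vertexEdgeDist (cactusChain n 4 2) v (edgF n x))).card := by
  classical
  set Q : Sym2 (Fin (n*3+1)) → Prop := fun e =>
    vertexEdgeDist (cactusChain n 4 2) u e < vertexEdgeDist (cactusChain n 4 2) v e with hQ
  have hset : {e : Sym2 (Fin (n*3+1)) | e ∈ (cactusChain n 4 2).edgeSet ∧ Q e} =
      ↑(((S n).filter (fun x => Q (edgF n x))).image (edgF n)) := by
    ext e
    simp only [Set.mem_setOf_eq, Finset.coe_image, Set.mem_image, Finset.mem_coe,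
      mem_filter]
    constructor
    · rintro ⟨he, hQe⟩
      obtain ⟨x, hx, rfl⟩ := edgeSet_sub he
      exact ⟨x, ⟨hx, hQe⟩, rfl⟩
    · rintro ⟨x, ⟨hx, hQx⟩, rfl⟩
      exact ⟨edgF_mem hx, hQx⟩
  calc edgeCloserCount (cactusChain n 4 2) u v
      = ({e : Sym2 (Fin (n*3+1)) | e ∈ (cactusChain n 4 2).edgeSet ∧ Q e}).ncard :=
        Nat.card_coe_set_eq _
    _ = (((S n).filter (fun x => Q (edgF n x))).image (edgF n)).card := by
        rw [hset, Set.ncard_coe_finset]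
    _ = ((S n).filter (fun x => Q (edgF n x))).card :=
        Finset.card_image_of_injOn (edgF_inj.mono (Finset.coe_subset.mpr (Finset.filter_subset _ _)))

lemma ved_eval {n : ℕ} (w : Fin (n*3+1)) {a s b : ℕ} (ha : a < n) (hs : s ≤ 1) (hb : b ≤ 1) :
    vertexEdgeDist (cactusChain n 4 2) w (edgF n (a, s, b)) =
      min (D (sideV a s) w.val) (D (cutV (a+b)) w.val) := by
  unfold vertexEdgeDist edgF
  rw [Sym2.lift_mk]
  dsimp only
  rw [dist_eq, dist_eq, sideF_val ha hs, cutF_val (by omega)]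

lemma cond_cs {n j t a s b : ℕ} (hj : j < n) (ht : t ≤ 1) (ha : a < n) (hs : s ≤ 1) (hb : b ≤ 1) :
    (vertexEdgeDist (cactusChain n 4 2) (cutF n j) (edgF n (a, s, b)) <
      vertexEdgeDist (cactusChain n 4 2) (sideF n j t) (edgF n (a, s, b))) ↔
      (a < j ∨ (a = j ∧ b = 0 ∧ s ≠ t)) := by
  rw [ved_eval _ ha hs hb, ved_eval _ ha hs hb, cutF_val hj.le, sideF_val hj ht,
    D_sc a s j hs, D_cc (a+b) j, D_ss a s j t hs ht, D_cs (a+b) j t ht]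
  rcases eq_or_ne a j with rfl | haj
  · rw [if_pos rfl]
    rcases eq_or_ne s t with rfl | hst
    · rw [if_pos rfl]; omega
    · rw [if_neg hst]; omega
  · rw [if_neg haj]; omega

lemma cond_sc {n j t a s b : ℕ} (hj : j < n) (ht : t ≤ 1) (ha : a < n) (hs : s ≤ 1) (hb : b ≤ 1) :
    (vertexEdgeDist (cactusChain n 4 2) (sideF n j t) (edgF n (a, s, b)) <
      vertexEdgeDist (cactusChain n 4 2) (cutF n j) (edgF n (a, s, b))) ↔
      (j < a ∨ (a = j ∧ b = 1 ∧ s = t)) := by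
  rw [ved_eval _ ha hs hb, ved_eval _ ha hs hb, cutF_val hj.le, sideF_val hj ht,
    D_sc a s j hs, D_cc (a+b) j, D_ss a s j t hs ht, D_cs (a+b) j t ht]
  rcases eq_or_ne a j with rfl | haj
  · rw [if_pos rfl]
    rcases eq_or_ne s t with rfl | hst
    · rw [if_pos rfl]; omega
    · rw [if_neg hst]; omega
  · rw [if_neg haj]; omega

lemma cond_sc' {n j t a s b : ℕ} (hj : j < n) (ht : t ≤ 1) (ha : a < n) (hs : s ≤ 1) (hb : b ≤ 1) :
    (vertexEdgeDist (cactusChain n 4 2) (sideF n j t) (edgF n (a, s, b)) <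
      vertexEdgeDist (cactusChain n 4 2) (cutF n (j+1)) (edgF n (a, s, b))) ↔
      (a < j ∨ (a = j ∧ b = 0 ∧ s = t)) := by
  rw [ved_eval _ ha hs hb, ved_eval _ ha hs hb, cutF_val (show j+1 ≤ n by omega), sideF_val hj ht,
    D_sc a s (j+1) hs, D_cc (a+b) (j+1), D_ss a s j t hs ht, D_cs (a+b) j t ht]
  rcases eq_or_ne a j with rfl | haj
  · rw [if_pos rfl]
    rcases eq_or_ne s t with rfl | hst
    · rw [if_pos rfl]; omega
    · rw [if_neg hst]; omega
  · rw [if_neg haj]; omega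

lemma cond_cs' {n j t a s b : ℕ} (hj : j < n) (ht : t ≤ 1) (ha : a < n) (hs : s ≤ 1) (hb : b ≤ 1) :
    (vertexEdgeDist (cactusChain n 4 2) (cutF n (j+1)) (edgF n (a, s, b)) <
      vertexEdgeDist (cactusChain n 4 2) (sideF n j t) (edgF n (a, s, b))) ↔
      (j < a ∨ (a = j ∧ b = 1 ∧ s ≠ t)) := by
  rw [ved_eval _ ha hs hb, ved_eval _ ha hs hb, cutF_val (show j+1 ≤ n by omega), sideF_val hj ht,
    D_sc a s (j+1) hs, D_cc (a+b) (j+1), D_ss a s j t hs ht, D_cs (a+b) j t ht]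
  rcases eq_or_ne a j with rfl | haj
  · rw [if_pos rfl]
    rcases eq_or_ne s t with rfl | hst
    · rw [if_pos rfl]; omega
    · rw [if_neg hst]; omega
  · rw [if_neg haj]; omega

lemma count_A {n j t : ℕ} (hj : j < n) (ht : t ≤ 1) :
    edgeCloserCount (cactusChain n 4 2) (cutF n j) (sideF n j t) = 4*j + 1 := by
  classical
  rw [count_eq]
  have hfe : ((S n).filter (fun x => vertexEdgeDist (cactusChain n 4 2) (cutF n j) (edgF n x) <
      vertexEdgeDist (cactusChain n 4 2) (sideF n j t) (edgF n x))) =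
      insert ((j, 1-t, 0) : ℕ × ℕ × ℕ) (range j ×ˢ range 2 ×ˢ range 2) := by
    ext ⟨a, s, b⟩
    simp only [mem_filter, mem_S, mem_insert, mem_product, mem_range, Prod.mk.injEq]
    constructor
    · rintro ⟨⟨ha, hs, hb⟩, hcond⟩
      rw [cond_cs hj ht ha hs hb] at hcond
      omega
    · intro h
      have ha : a < n := by omega
      have hs : s ≤ 1 := by omega
      have hb : b ≤ 1 := by omega
      exact ⟨⟨ha, hs, hb⟩, (cond_cs hj ht ha hs hb).mpr (by omega)⟩
  rw [hfe, Finset.card_insert_of_notMem (by simp)]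
  simp only [Finset.card_product, Finset.card_range]
  omega

lemma count_B {n j t : ℕ} (hj : j < n) (ht : t ≤ 1) :
    edgeCloserCount (cactusChain n 4 2) (sideF n j t) (cutF n j) = 4*(n-1-j) + 1 := by
  classical
  rw [count_eq]
  have hfe : ((S n).filter (fun x => vertexEdgeDist (cactusChain n 4 2) (sideF n j t) (edgF n x) <
      vertexEdgeDist (cactusChain n 4 2) (cutF n j) (edgF n x))) =
      insert ((j, t, 1) : ℕ × ℕ × ℕ) (Ico (j+1) n ×ˢ range 2 ×ˢ range 2) := by
    ext ⟨a, s, b⟩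
    simp only [mem_filter, mem_S, mem_insert, mem_product, mem_range, mem_Ico, Prod.mk.injEq]
    constructor
    · rintro ⟨⟨ha, hs, hb⟩, hcond⟩
      rw [cond_sc hj ht ha hs hb] at hcond
      omega
    · intro h
      have ha : a < n := by omega
      have hs : s ≤ 1 := by omega
      have hb : b ≤ 1 := by omega
      exact ⟨⟨ha, hs, hb⟩, (cond_sc hj ht ha hs hb).mpr (by omega)⟩
  rw [hfe, Finset.card_insert_of_notMem (by simp)]
  simp only [Finset.card_product, Finset.card_range, Nat.card_Ico]
  omega

lemma count_C {n j t : ℕ} (hj : j < n) (ht : t ≤ 1) :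
    edgeCloserCount (cactusChain n 4 2) (sideF n j t) (cutF n (j+1)) = 4*j + 1 := by
  classical
  rw [count_eq]
  have hfe : ((S n).filter (fun x => vertexEdgeDist (cactusChain n 4 2) (sideF n j t) (edgF n x) <
      vertexEdgeDist (cactusChain n 4 2) (cutF n (j+1)) (edgF n x))) =
      insert ((j, t, 0) : ℕ × ℕ × ℕ) (range j ×ˢ range 2 ×ˢ range 2) := by
    ext ⟨a, s, b⟩
    simp only [mem_filter, mem_S, mem_insert, mem_product, mem_range, Prod.mk.injEq]
    constructor
    · rintro ⟨⟨ha, hs, hb⟩, hcond⟩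
      rw [cond_sc' hj ht ha hs hb] at hcond
      omega
    · intro h
      have ha : a < n := by omega
      have hs : s ≤ 1 := by omega
      have hb : b ≤ 1 := by omega
      exact ⟨⟨ha, hs, hb⟩, (cond_sc' hj ht ha hs hb).mpr (by omega)⟩
  rw [hfe, Finset.card_insert_of_notMem (by simp)]
  simp only [Finset.card_product, Finset.card_range]
  omega

lemma count_D {n j t : ℕ} (hj : j < n) (ht : t ≤ 1) :
    edgeCloserCount (cactusChain n 4 2) (cutF n (j+1)) (sideF n j t) = 4*(n-1-j) + 1 := by
  classical
  rw [count_eq]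
  have hfe : ((S n).filter (fun x => vertexEdgeDist (cactusChain n 4 2) (cutF n (j+1)) (edgF n x) <
      vertexEdgeDist (cactusChain n 4 2) (sideF n j t) (edgF n x))) =
      insert ((j, 1-t, 1) : ℕ × ℕ × ℕ) (Ico (j+1) n ×ˢ range 2 ×ˢ range 2) := by
    ext ⟨a, s, b⟩
    simp only [mem_filter, mem_S, mem_insert, mem_product, mem_range, mem_Ico, Prod.mk.injEq]
    constructor
    · rintro ⟨⟨ha, hs, hb⟩, hcond⟩
      rw [cond_cs' hj ht ha hs hb] at hcond
      omega
    · intro h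
      have ha : a < n := by omega
      have hs : s ≤ 1 := by omega
      have hb : b ≤ 1 := by omega
      exact ⟨⟨ha, hs, hb⟩, (cond_cs' hj ht ha hs hb).mpr (by omega)⟩
  rw [hfe, Finset.card_insert_of_notMem (by simp)]
  simp only [Finset.card_product, Finset.card_range, Nat.card_Ico]
  omega

lemma term_eval {n : ℕ} {a s b : ℕ} (ha : a < n) (hs : s ≤ 1) (hb : b ≤ 1) :
    emostarTerm (cactusChain n 4 2) (edgF n (a, s, b)) =
      (4*(n-1-a) - 4*a) + (4*a - 4*(n-1-a)) := by
  unfold emostarTerm edgF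
  rw [Sym2.lift_mk]
  dsimp only
  interval_cases b
  · have h0 : cutF n (a+0) = cutF n a := by norm_num
    rw [h0, count_B ha hs, count_A ha hs]
    omega
  · rw [count_C ha hs, count_D ha hs]
    omega

lemma emostar_sum (n : ℕ) :
    emostar (cactusChain n 4 2) = ∑ x ∈ S n, emostarTerm (cactusChain n 4 2) (edgF n x) := by
  classical
  have hset : ∀ (i : Fintype (cactusChain n 4 2).edgeSet),
      (@SimpleGraph.edgeFinset _ (cactusChain n 4 2) i) = (S n).image (edgF n) := by
    intro i
    ext e
    rw [SimpleGraph.mem_edgeFinset, Finset.mem_image]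
    constructor
    · intro he
      obtain ⟨x, hx, rfl⟩ := edgeSet_sub he
      exact ⟨x, hx, rfl⟩
    · rintro ⟨x, hx, rfl⟩
      exact edgF_mem hx
  unfold emostar
  rw [hset, Finset.sum_image (fun x hx y hy h => edgF_inj hx hy h)]

def Aseq : ℕ → ℕ := fun n => ∑ a ∈ range n, ((n-1-2*a) + (2*a - (n-1)))

lemma A_rec (m : ℕ) : Aseq (m+2) = Aseq m + 2*(m+1) := by
  unfold Aseq
  rw [Finset.sum_range_succ, Finset.sum_range_succ']
  have h : ∀ a ∈ range m, ((m+2-1-2*(a+1)) + (2*(a+1) - (m+2-1))) =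
      ((m-1-2*a) + (2*a - (m-1))) := fun a ha => by
    rw [mem_range] at ha; omega
  rw [Finset.sum_congr rfl h]
  omega

lemma A_even (k : ℕ) : Aseq (2*k) = 2*k^2 := by
  induction k with
  | zero => simp [Aseq]
  | succ k ih =>
    have : 2*(k+1) = 2*k+2 := by omega
    rw [this, A_rec, ih]
    ring_nf

lemma A_odd (k : ℕ) : Aseq (2*k+1) = 2*k^2 + 2*k := by
  induction k with
  | zero => simp [Aseq]
  | succ k ih =>
    have : 2*(k+1)+1 = (2*k+1)+2 := by omega
    rw [this, A_rec, ih]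
    ring_nf

lemma emostar_val (n : ℕ) : emostar (cactusChain n 4 2) = 16 * Aseq n := by
  rw [emostar_sum]
  rw [show S n = range n ×ˢ (range 2 ×ˢ range 2) from rfl]
  rw [Finset.sum_product]
  have h : ∀ a ∈ range n, (∑ y ∈ range 2 ×ˢ range 2,
      emostarTerm (cactusChain n 4 2) (edgF n (a, y))) =
      16 * ((n-1-2*a) + (2*a - (n-1))) := by
    intro a ha
    rw [mem_range] at ha
    have h2 : ∀ y ∈ range 2 ×ˢ range 2, emostarTerm (cactusChain n 4 2) (edgF n (a, y)) =
        (4*(n-1-a) - 4*a) + (4*a - 4*(n-1-a)) := by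
      rintro ⟨s, b⟩ hy
      simp only [mem_product, mem_range] at hy
      exact term_eval ha (by omega) (by omega)
    rw [Finset.sum_congr rfl h2, Finset.sum_const]
    simp only [Finset.card_product, Finset.card_range, smul_eq_mul]
    omega
  rw [Finset.sum_congr rfl h, ← Finset.mul_sum]
  rfl

end ParaSquare

theorem emostar_paraSquare (k : ℕ) (hk : 1 ≤ k) :
    emostar (cactusChain (2 * k) 4 2) = 32 * k ^ 2 ∧
    emostar (cactusChain (2 * k + 1) 4 2) = 32 * k ^ 2 + 32 * k := by
  constructor
  · rw [ParaSquare.emostar_val, ParaSquare.A_even]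
    ring
  · rw [ParaSquare.emostar_val, ParaSquare.A_odd]
    ring
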